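/- The inequality (1−p)·(sin x)/x + p·(tan x)/x > 1 holds for all x in (0, π/2) if and only if p ≥ 1/3. -/

import Mathlib

open Real

lemma poly_aux (e : ℝ) (h0 : 0 < e) (h1 : e ≤ 1) :
    (1 - (1-e)/3) * (e/30 - (e/30)^3/6 + (e/30)^4*(5/96)) * (1 - (e/30)^2/2 + (e/30)^4*(5/96))
      + ((1-e)/3) * (e/30 - (e/30)^3/6 + (e/30)^4*(5/96))
      ≤ (e/30) * (1 - (e/30)^2/2 - (e/30)^4*(5/96)) := by
  have h4 : 0 < e^4 := by positivity
  have he5 : e^5 ≤ e^4 := by nlinarith [pow_pos h0 4]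
  have he6 : e^6 ≤ e^4 := by nlinarith [pow_pos h0 4, pow_pos h0 5]
  have he9 : e^9 ≤ e^4 := by nlinarith [pow_pos h0 4, pow_pos h0 5, pow_pos h0 6, pow_pos h0 7, pow_pos h0 8]
  have he7 : 0 ≤ e^7 := by positivity
  have he8 : 0 ≤ e^8 := by positivity
  nlinarith [h4, he5, he6, he7, he8, he9]

lemma huygens_aux {x : ℝ} (hx : 0 < x) (hx2 : x < π / 2) :
    3 * x < 2 * Real.sin x + Real.tan x := by
  have key : StrictMonoOn (fun y => 2 * Real.sin y + Real.tan y - 3 * y)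
      (Set.Ico 0 (π / 2)) := by
    apply strictMonoOn_of_deriv_pos (convex_Ico _ _)
    · apply ContinuousOn.sub
      · apply ContinuousOn.add
        · exact (continuous_const.mul Real.continuous_sin).continuousOn
        · apply Real.continuousOn_tan.mono
          intro y hy
          simp only [Set.mem_setOf_eq]
          have : Real.cos y > 0 := Real.cos_pos_of_mem_Ioo
            ⟨by linarith [hy.1, Real.pi_pos], hy.2⟩
          exact ne_of_gt this
      · exact (continuous_const.mul continuous_id).continuousOn
    · intro y hy
      rw [interior_Ico] at hy
      have hc : 0 < Real.cos y := Real.cos_pos_of_mem_Ioo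
        ⟨by linarith [hy.1, Real.pi_pos], hy.2⟩
      have hsy : 0 < Real.sin y := Real.sin_pos_of_pos_of_lt_pi hy.1
        (by linarith [hy.2, Real.pi_pos])
      have hc1 : Real.cos y < 1 := by
        nlinarith [Real.sin_sq_add_cos_sq y]
      have hd : HasDerivAt (fun y => 2 * Real.sin y + Real.tan y - 3 * y)
          (2 * Real.cos y + 1 / Real.cos y ^ 2 - 3 * 1) y := by
        exact (((Real.hasDerivAt_sin y).const_mul 2).add
          (Real.hasDerivAt_tan (ne_of_gt hc))).sub
          ((hasDerivAt_id y).const_mul 3)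
      rw [hd.deriv]
      have h2 : 0 < (1 - Real.cos y) ^ 2 * (2 * Real.cos y + 1) :=
        mul_pos (pow_pos (by linarith) 2) (by linarith)
      have hu : (1 / Real.cos y ^ 2) * Real.cos y ^ 2 = 1 := by
        field_simp
      nlinarith [h2, hu, mul_pos hc hc, sq_nonneg (Real.cos y)]
  have h0 : (0:ℝ) ∈ Set.Ico 0 (π/2) := ⟨le_refl _, by linarith [Real.pi_pos]⟩
  have hxm : x ∈ Set.Ico 0 (π/2) := ⟨le_of_lt hx, hx2⟩
  have := key h0 hxm hx
  simp only [Real.sin_zero, Real.tan_zero, mul_zero, sub_zero, add_zero] at this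
  linarith

set_option maxHeartbeats 1000000 in
theorem huygens_type_p_circular (p : ℝ) :
    (∀ x : ℝ, 0 < x → x < π / 2 →
      (1 - p) * Real.sin x / x + p * Real.tan x / x > 1) ↔ p ≥ 1 / 3 := by
  constructor
  · intro h
    by_contra hp
    push_neg at hp
    rcases le_or_gt p 0 with hp0 | hp0
    · -- use x = 1
      have h1 : (0:ℝ) < 1 := one_pos
      have h2 : (1:ℝ) < π / 2 := by linarith [Real.pi_gt_three]
      have := h 1 h1 h2
      have hc : 0 < Real.cos 1 := Real.cos_pos_of_mem_Ioo
        ⟨by linarith [Real.pi_pos], h2⟩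
      have hs : 0 < Real.sin 1 := Real.sin_pos_of_pos_of_lt_pi one_pos
        (by linarith [Real.pi_gt_three])
      have hc1 : Real.cos 1 < 1 := by nlinarith [Real.sin_sq_add_cos_sq 1]
      have hts : Real.sin 1 < Real.tan 1 := by
        rw [Real.tan_eq_sin_div_cos, lt_div_iff₀ hc]; nlinarith
      have hs1 : Real.sin 1 < 1 := by
        have := Real.sin_lt one_pos
        linarith
      simp only [div_one] at this
      nlinarith
    · -- 0 < p < 1/3, take x = (1 - 3*p)/30
      obtain ⟨x, hxdef⟩ : ∃ x : ℝ, x = (1 - 3*p)/30 := ⟨_, rfl⟩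
      have hx : 0 < x := by rw [hxdef]; linarith
      have hx1 : x ≤ 1/30 := by rw [hxdef]; linarith
      have hx2 : x < π/2 := by linarith [Real.pi_gt_three]
      have hax : |x| ≤ 1 := by rw [abs_of_pos hx]; linarith
      have hsb := Real.sin_bound hax
      have hcb := Real.cos_bound hax
      rw [abs_of_pos hx] at hsb hcb
      rw [abs_sub_le_iff] at hsb hcb
      have hsub : Real.sin x ≤ x - x^3/6 + x^4 * (5/96) := by nlinarith [hsb.1, mul_le_mul_of_nonneg_left hx1 (pow_pos hx 4).le]
      have hcub : Real.cos x ≤ 1 - x^2/2 + x^4 * (5/96) := by linarith [hcb.1]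
      have hclb : 1 - x^2/2 - x^4 * (5/96) ≤ Real.cos x := by linarith [hcb.2]
      have hc : 0 < Real.cos x := Real.cos_pos_of_mem_Ioo
        ⟨by linarith [Real.pi_pos], hx2⟩
      have hs : 0 < Real.sin x := Real.sin_pos_of_pos_of_lt_pi hx
        (by linarith [Real.pi_gt_three])
      have hmain := h x hx hx2
      rw [gt_iff_lt, show (1-p) * Real.sin x / x + p * Real.tan x / x
          = ((1-p) * Real.sin x + p * Real.tan x) / x by ring,
        lt_div_iff₀ hx, one_mul] at hmain
      rw [Real.tan_eq_sin_div_cos] at hmain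
      have hmain2 : x * Real.cos x < (1-p) * Real.sin x * Real.cos x + p * Real.sin x := by
        have h3 := mul_lt_mul_of_pos_right hmain hc
        have h4 : ((1-p) * Real.sin x + p * (Real.sin x / Real.cos x)) * Real.cos x
            = (1-p) * Real.sin x * Real.cos x + p * Real.sin x := by
          field_simp
        linarith [h3, h4.symm.le, h4.le]
      have h1p : 0 < 1 - p := by linarith
      have hxS : 0 ≤ x - x^3/6 + x^4 * (5/96) := by
        nlinarith [hx, hx1, sq_nonneg x, mul_pos hx hx, mul_pos (mul_pos hx hx) hx]
      have hb1 : (1-p) * Real.sin x * Real.cos x ≤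
          (1-p) * (x - x^3/6 + x^4 * (5/96)) * (1 - x^2/2 + x^4 * (5/96)) := by
        apply mul_le_mul (mul_le_mul_of_nonneg_left hsub h1p.le) hcub hc.le
          (mul_nonneg h1p.le hxS)
      have hb2 : p * Real.sin x ≤ p * (x - x^3/6 + x^4 * (5/96)) :=
        mul_le_mul_of_nonneg_left hsub hp0.le
      have hb3 : x * (1 - x^2/2 - x^4 * (5/96)) ≤ x * Real.cos x :=
        mul_le_mul_of_nonneg_left hclb hx.le
      have hfin : (1-p) * (x - x^3/6 + x^4 * (5/96)) * (1 - x^2/2 + x^4 * (5/96))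
          + p * (x - x^3/6 + x^4 * (5/96)) ≤ x * (1 - x^2/2 - x^4 * (5/96)) := by
        have hkey := poly_aux (1 - 3*p) (by linarith) (by linarith)
        have hxe : x = (1 - 3*p)/30 := hxdef
        rw [hxe]
        linarith [hkey]
      linarith
  · intro hp x hx hx2
    have hc : 0 < Real.cos x := Real.cos_pos_of_mem_Ioo
      ⟨by linarith [Real.pi_pos], hx2⟩
    have hs : 0 < Real.sin x := Real.sin_pos_of_pos_of_lt_pi hx
      (by linarith [Real.pi_gt_three])
    have hc1 : Real.cos x < 1 := by nlinarith [Real.sin_sq_add_cos_sq x]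
    have hts : Real.sin x < Real.tan x := by
      rw [Real.tan_eq_sin_div_cos, lt_div_iff₀ hc]
      nlinarith
    have hh := huygens_aux hx hx2
    rw [gt_iff_lt, show (1-p) * Real.sin x / x + p * Real.tan x / x
        = ((1-p) * Real.sin x + p * Real.tan x) / x by ring,
      lt_div_iff₀ hx, one_mul]
    nlinarith [mul_nonneg (by linarith : (0:ℝ) ≤ p - 1/3) (le_of_lt (sub_pos.mpr hts))]
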